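/- Let H be a complex Hilbert space, x a unit vector, P = x ⊗ x the rank-one orthogonal projection onto the span of x, and T a bounded operator with ‖T‖ = 1 and ‖T + P‖ = 2. Then Tx = x. -/

import Mathlib

/-- If `x` is a unit vector, `P = x ⊗ x` the rank-one projection onto `ℂx`,
and `T` is bounded with `‖T‖ = 1` and `‖T + P‖ = 2`, then `T x = x`. -/
theorem stmt1 {H : Type*} [NormedAddCommGroup H] [InnerProductSpace ℂ H] [CompleteSpace H]
    (x : H) (hx : ‖x‖ = 1) (T : H →L[ℂ] H) (hT : ‖T‖ = 1)
    (hTP : ‖T + (innerSL ℂ x).smulRight x‖ = 2) :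
    T x = x := by
  set P := (innerSL ℂ x).smulRight x with hP
  have key : (2:ℝ) ≤ ‖T x + x‖ := by
    refine le_of_forall_pos_le_add fun δ hδ => ?_
    set ε : ℝ := min (δ^2/8) (min (δ/2) (1/2)) with hεdef
    have hε0 : 0 < ε := by positivity
    have hε1 : ε ≤ 1/2 := le_trans (min_le_right _ _) (min_le_right _ _)
    have hεδ : ε ≤ δ/2 := le_trans (min_le_right _ _) (min_le_left _ _)
    have hsq : Real.sqrt (2*ε) ≤ δ/2 := by
      have h8 : ε ≤ δ^2/8 := min_le_left _ _
      have h2 : 2*ε ≤ (δ/2)^2 := by nlinarith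
      calc Real.sqrt (2*ε) ≤ Real.sqrt ((δ/2)^2) := Real.sqrt_le_sqrt h2
        _ = δ/2 := Real.sqrt_sq (by positivity)
    obtain ⟨y, hy1, hy2⟩ := (T + P).exists_lt_apply_of_lt_opNorm (r := 2 - ε)
      (by rw [hTP]; linarith)
    have hy1 : ‖y‖ ≤ 1 := hy1.le
    have hPy : (T + P) y = T y + (inner ℂ x y : ℂ) • x := by
      simp [hP, ContinuousLinearMap.smulRight_apply]
    set c : ℂ := (inner ℂ x y : ℂ) with hc
    have hc1 : ‖c‖ ≤ 1 := by
      have h := norm_inner_le_norm (𝕜 := ℂ) x y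
      rw [hx, one_mul] at h
      exact h.trans hy1
    have hTy : ‖T y‖ ≤ 1 := by
      calc ‖T y‖ ≤ ‖T‖ * ‖y‖ := T.le_opNorm y
        _ ≤ 1 := by rw [hT]; linarith
    have hcx : ‖c • x‖ = ‖c‖ := by rw [norm_smul, hx, mul_one]
    have hy2' : 2 - ε < ‖T y + c • x‖ := by rw [← hPy]; exact hy2
    have hcge : 1 - ε < ‖c‖ := by
      have h2 : 2 - ε < ‖T y‖ + ‖c • x‖ := hy2'.trans_le (norm_add_le _ _)
      rw [hcx] at h2; linarith
    set w := y - c • x with hw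
    have hwsq : ‖w‖^2 ≤ 2*ε := by
      have h1 : ‖w‖^2 = ‖y‖^2 - 2 * RCLike.re (inner ℂ y (c • x) : ℂ) + ‖c • x‖^2 := by
        rw [hw, @norm_sub_sq ℂ]
      have h3 : RCLike.re (inner ℂ y (c • x) : ℂ) = ‖c‖^2 := by
        rw [inner_smul_right, ← inner_conj_symm y x, ← hc, Complex.mul_conj]
        simp [Complex.normSq_eq_norm_sq, ← Complex.ofReal_pow]
      have expand : ‖w‖^2 = ‖y‖^2 - ‖c‖^2 := by rw [h1, h3, hcx]; ring
      have hcge' : (1-ε)^2 ≤ ‖c‖^2 := by nlinarith [norm_nonneg c]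
      have hy2 : ‖y‖^2 ≤ 1 := by nlinarith [norm_nonneg y]
      nlinarith
    have hTw : ‖T w‖ ≤ Real.sqrt (2*ε) := by
      have hwle : ‖w‖ ≤ Real.sqrt (2*ε) := by
        calc ‖w‖ = Real.sqrt (‖w‖^2) := (Real.sqrt_sq (norm_nonneg w)).symm
          _ ≤ Real.sqrt (2*ε) := Real.sqrt_le_sqrt hwsq
      calc ‖T w‖ ≤ ‖T‖ * ‖w‖ := T.le_opNorm w
        _ = ‖w‖ := by rw [hT, one_mul]
        _ ≤ Real.sqrt (2*ε) := hwle
    have hdecomp : T y + c • x = c • (T x + x) + T w := by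
      rw [hw, map_sub, map_smul, smul_add]
      abel
    have hfin : 2 - ε - Real.sqrt (2*ε) < ‖c‖ * ‖T x + x‖ := by
      have h2 : 2 - ε < ‖c • (T x + x)‖ + ‖T w‖ :=
        hy2'.trans_le (by rw [hdecomp]; exact norm_add_le _ _)
      rw [norm_smul] at h2
      linarith
    have hle : ‖c‖ * ‖T x + x‖ ≤ ‖T x + x‖ :=
      mul_le_of_le_one_left (norm_nonneg _) hc1
    linarith
  have h1 : ‖T x‖ ≤ 1 := by
    calc ‖T x‖ ≤ ‖T‖ * ‖x‖ := T.le_opNorm x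
      _ = 1 := by rw [hT, hx, one_mul]
  have h2 : ‖T x + x‖ ≤ 2 := by
    calc ‖T x + x‖ ≤ ‖T x‖ + ‖x‖ := norm_add_le _ _
      _ ≤ 2 := by rw [hx]; linarith
  have heq : ‖T x + x‖ = 2 := le_antisymm h2 key
  have hpar := parallelogram_law_with_norm ℂ (T x) x
  have hz : ‖T x - x‖ = 0 := by
    rw [heq, hx] at hpar
    nlinarith [norm_nonneg (T x - x), norm_nonneg (T x)]
  exact sub_eq_zero.mp (norm_eq_zero.mp hz)
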